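/- The induced-subgraph relation on finite Σ-labeled graphs in which the length of every simple path is bounded by a fixed constant K is a well-quasi-order: every infinite sequence G_0, G_1, ... of such graphs contains indices i < j such that G_i is isomorphic to an induced subgraph of G_j with matching labels. -/

import Mathlib

namespace Stmt5

abbrev Lab (σ : Type) (K : ℕ) := σ × (Fin K → Bool)

def Code (σ : Type) (K : ℕ) : ℕ → Type
  | 0 => Lab σ K
  | n+1 => Lab σ K × List (Code σ K n)

def CodeRel (σ : Type) (K : ℕ) : (n : ℕ) → Code σ K n → Code σ K n → Prop
  | 0 => Eq
  | n+1 => fun c d => c.1 = d.1 ∧ List.SublistForall₂ (CodeRel σ K n) c.2 d.2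

variable {σ : Type} {K : ℕ}

theorem codeRel_refl : ∀ (n : ℕ) (c : Code σ K n), CodeRel σ K n c c
  | 0, _ => rfl
  | n+1, c => by
    haveI : IsRefl (Code σ K n) (CodeRel σ K n) := ⟨codeRel_refl n⟩
    exact ⟨rfl, refl_of (List.SublistForall₂ (CodeRel σ K n)) c.2⟩

theorem codeRel_trans : ∀ (n : ℕ) (a b c : Code σ K n),
    CodeRel σ K n a b → CodeRel σ K n b c → CodeRel σ K n a c
  | 0, _, _, _, h1, h2 => h1.trans h2
  | n+1, a, b, c, h1, h2 => by
    haveI : IsTrans (Code σ K n) (CodeRel σ K n) := ⟨codeRel_trans n⟩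
    exact ⟨h1.1.trans h2.1, trans_of (List.SublistForall₂ (CodeRel σ K n)) h1.2 h2.2⟩

theorem codeRel_pwo [Finite σ] :
    ∀ n : ℕ, (Set.univ : Set (Code σ K n)).PartiallyWellOrderedOn (CodeRel σ K n)
  | 0 => by
    haveI : IsRefl (Code σ K 0) (CodeRel σ K 0) := ⟨codeRel_refl 0⟩
    haveI : Finite (Code σ K 0) := (inferInstance : Finite (Lab σ K))
    exact Set.Finite.partiallyWellOrderedOn Set.finite_univ
  | n+1 => by
    haveI : IsRefl (Code σ K n) (CodeRel σ K n) := ⟨codeRel_refl n⟩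
    haveI : IsTrans (Code σ K n) (CodeRel σ K n) := ⟨codeRel_trans n⟩
    haveI : IsRefl (Lab σ K) Eq := ⟨fun _ => rfl⟩
    have h1 : (Set.univ : Set (Lab σ K)).PartiallyWellOrderedOn Eq :=
      Set.Finite.partiallyWellOrderedOn Set.finite_univ
    haveI : IsPreorder (Code σ K n) (CodeRel σ K n) := {}
    have h2 := (codeRel_pwo n).partiallyWellOrderedOn_sublistForall₂ (r := CodeRel σ K n)
    have h3 := h1.prod h2
    rw [Set.partiallyWellOrderedOn_iff_exists_lt] at h3 ⊢
    intro f hf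
    exact h3 f (fun k => ⟨Set.mem_univ _, fun x _ => Set.mem_univ _⟩)





theorem sf_index {α β : Type*} {r : α → β → Prop} {l₁ : List α} {l₂ : List β}
    (h : List.SublistForall₂ r l₁ l₂) :
    ∃ g : Fin l₁.length → Fin l₂.length, Function.Injective g ∧
      ∀ i, r (l₁.get i) (l₂.get (g i)) := by
  induction h with
  | nil => exact ⟨Fin.elim0, fun i => i.elim0, fun i => i.elim0⟩
  | @cons a b t₁ t₂ hr hsf ih =>
    obtain ⟨g, hg, hget⟩ := ih
    refine ⟨Fin.cases ⟨0, Nat.succ_pos _⟩ (fun i => (g i).succ), ?_, ?_⟩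
    · intro i j hij
      rcases Fin.eq_zero_or_eq_succ i with rfl | ⟨i', rfl⟩ <;>
        rcases Fin.eq_zero_or_eq_succ j with rfl | ⟨j', rfl⟩ <;>
        simp only [Fin.cases_zero, Fin.cases_succ] at hij ⊢
      · exact absurd hij.symm (by exact Fin.succ_ne_zero _)
      · exact absurd hij (by exact Fin.succ_ne_zero _)
      · exact congrArg Fin.succ (hg (Fin.succ_injective _ hij))
    · intro i
      rcases Fin.eq_zero_or_eq_succ i with rfl | ⟨i', rfl⟩
      · simpa using hr
      · simpa using hget i'
  | @cons_right b t₁ t₂ hsf ih =>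
    obtain ⟨g, hg, hget⟩ := ih
    exact ⟨fun i => (g i).succ, fun i j hh => hg (Fin.succ_injective _ hh),
      fun i => by simpa using hget i⟩

theorem glue {V₁ V₂ L : Type} (G₁ : SimpleGraph V₁) (G₂ : SimpleGraph V₂)
    (lab₁ : V₁ → L) (lab₂ : V₂ → L) {m₁ m₂ : ℕ}
    (part₁ : V₁ → Fin m₁) (part₂ : V₂ → Fin m₂)
    (hp₁ : ∀ x y, G₁.Adj x y → part₁ x = part₁ y)
    (hp₂ : ∀ x y, G₂.Adj x y → part₂ x = part₂ y)
    (g : Fin m₁ → Fin m₂) (hg : Function.Injective g)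
    (ψ : ∀ i, {x // part₁ x = i} → {y // part₂ y = g i})
    (hinj : ∀ i, Function.Injective (ψ i))
    (hlab : ∀ i x, lab₂ (ψ i x).1 = lab₁ x.1)
    (hadj : ∀ i x y, G₁.Adj x.1 y.1 ↔ G₂.Adj (ψ i x).1 (ψ i y).1) :
    ∃ φ : V₁ → V₂, Function.Injective φ ∧ (∀ v, lab₂ (φ v) = lab₁ v) ∧
      ∀ v w, G₁.Adj v w ↔ G₂.Adj (φ v) (φ w) := by
  have key : ∀ i j (h : i = j) (x : {x // part₁ x = i}) (y : {x // part₁ x = j}),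
      (ψ i x).1 = (ψ j y).1 → x.1 = y.1 := by
    rintro i j rfl x y h
    exact congrArg Subtype.val (hinj i (Subtype.ext h))
  have keyadj : ∀ i j (h : i = j) (x : {x // part₁ x = i}) (y : {x // part₁ x = j}),
      G₁.Adj x.1 y.1 ↔ G₂.Adj (ψ i x).1 (ψ j y).1 := by
    rintro i j rfl x y
    exact hadj i x y
  refine ⟨fun v => (ψ (part₁ v) ⟨v, rfl⟩).1, ?_, fun v => hlab _ _, ?_⟩
  · intro v w h
    simp only at h
    have hpq : g (part₁ v) = g (part₁ w) := by
      rw [← (ψ (part₁ v) ⟨v, rfl⟩).2, ← (ψ (part₁ w) ⟨w, rfl⟩).2, h]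
    exact key _ _ (hg hpq) ⟨v, rfl⟩ ⟨w, rfl⟩ h
  · intro v w
    by_cases hvw : part₁ v = part₁ w
    · exact keyadj _ _ hvw ⟨v, rfl⟩ ⟨w, rfl⟩
    · constructor
      · intro h; exact absurd (hp₁ _ _ h) hvw
      · intro h
        exact absurd (hg ((((ψ (part₁ v) ⟨v, rfl⟩).2).symm.trans (hp₂ _ _ h)).trans
          (ψ (part₁ w) ⟨w, rfl⟩).2)) hvw

def vecAt (l : Lab σ K) (d : ℕ) : Prop :=
  ∃ h : d < K, l.2 ⟨d, h⟩ = true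

def Rep (σ : Type) (K : ℕ) :
    (n : ℕ) → ℕ → Code σ K n → (V : Type) → SimpleGraph V → (V → Lab σ K) → Prop
  | 0, _, a, V, _, lab => Nonempty V ∧ (∀ v w : V, v = w) ∧ ∀ v, lab v = a
  | n+1, d, c, V, G, lab =>
    ∃ r : V, lab r = c.1 ∧
      (∀ v : V, v ≠ r → (vecAt (lab v) d ↔ G.Adj r v)) ∧
      ∃ part : {v : V // v ≠ r} → Fin c.2.length,
        (∀ x y : {v : V // v ≠ r}, G.Adj x.1 y.1 → part x = part y) ∧
        ∀ i : Fin c.2.length,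
          Rep σ K n (d+1) (c.2.get i) {x : {v : V // v ≠ r} // part x = i}
            (G.comap (fun y => y.1.1)) (fun y => lab y.1.1)

theorem main : ∀ (n d : ℕ) (c₁ c₂ : Code σ K n), CodeRel σ K n c₁ c₂ →
    ∀ (V₁ V₂ : Type) (G₁ : SimpleGraph V₁) (G₂ : SimpleGraph V₂)
      (lab₁ : V₁ → Lab σ K) (lab₂ : V₂ → Lab σ K),
      Rep σ K n d c₁ V₁ G₁ lab₁ → Rep σ K n d c₂ V₂ G₂ lab₂ →
      ∃ φ : V₁ → V₂, Function.Injective φ ∧ (∀ v, lab₂ (φ v) = lab₁ v) ∧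
        ∀ v w, G₁.Adj v w ↔ G₂.Adj (φ v) (φ w)
  | 0, d, c₁, c₂, hrel, V₁, V₂, G₁, G₂, lab₁, lab₂, h₁, h₂ => by
    obtain ⟨⟨x₁⟩, sub₁, hl₁⟩ := h₁
    obtain ⟨⟨x₂⟩, sub₂, hl₂⟩ := h₂
    refine ⟨fun _ => x₂, fun a b _ => sub₁ a b, fun v => ?_, fun v w => ?_⟩
    · rw [hl₂ x₂, hl₁ v]; exact hrel.symm
    · exact iff_of_false (by rw [sub₁ v w]; exact G₁.irrefl) G₂.irrefl
  | n+1, d, c₁, c₂, hrel, V₁, V₂, G₁, G₂, lab₁, lab₂, h₁, h₂ => by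
    obtain ⟨r₁, hr₁, hvec₁, part₁, hpart₁, hrep₁⟩ := h₁
    obtain ⟨r₂, hr₂, hvec₂, part₂, hpart₂, hrep₂⟩ := h₂
    obtain ⟨hlabeq, hsf⟩ := hrel
    obtain ⟨g, hg, hget⟩ := sf_index hsf
    choose ψ hinj hlab hadj using fun i =>
      main n (d+1) (c₁.2.get i) (c₂.2.get (g i)) (hget i) _ _ _ _ _ _
        (hrep₁ i) (hrep₂ (g i))
    obtain ⟨φ', hinj', hlab', hadj'⟩ :=
      glue (G₁.comap (Subtype.val : {v : V₁ // v ≠ r₁} → V₁))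
        (G₂.comap (Subtype.val : {v : V₂ // v ≠ r₂} → V₂))
        (fun x => lab₁ x.1) (fun x => lab₂ x.1) part₁ part₂ hpart₁ hpart₂ g hg ψ hinj
        (fun i x => hlab i x) (fun i x y => hadj i x y)
    classical
    refine ⟨fun v => if h : v = r₁ then r₂ else (φ' ⟨v, h⟩).1, ?_, ?_, ?_⟩
    · intro v w h
      dsimp only at h
      by_cases hv : v = r₁ <;> by_cases hw : w = r₁
      · rw [hv, hw]
      · rw [dif_pos hv, dif_neg hw] at h
        exact absurd h.symm (φ' ⟨w, hw⟩).2
      · rw [dif_neg hv, dif_pos hw] at h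
        exact absurd h (φ' ⟨v, hv⟩).2
      · rw [dif_neg hv, dif_neg hw] at h
        exact congrArg Subtype.val (hinj' (Subtype.ext h))
    · intro v
      dsimp only
      by_cases hv : v = r₁
      · rw [dif_pos hv, hr₂, hv, hr₁, hlabeq]
      · rw [dif_neg hv]; exact hlab' ⟨v, hv⟩
    · intro v w
      dsimp only
      by_cases hv : v = r₁ <;> by_cases hw : w = r₁
      · rw [dif_pos hv, dif_pos hw, hv, hw]
        exact iff_of_false G₁.irrefl G₂.irrefl
      · rw [dif_pos hv, dif_neg hw, hv]
        have e1 := hvec₁ w hw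
        have e2 := hvec₂ (φ' ⟨w, hw⟩).1 (φ' ⟨w, hw⟩).2
        rw [hlab' ⟨w, hw⟩] at e2
        exact e1.symm.trans e2
      · rw [dif_neg hv, dif_pos hw, hw]
        have e1 := hvec₁ v hv
        have e2 := hvec₂ (φ' ⟨v, hv⟩).1 (φ' ⟨v, hv⟩).2
        rw [hlab' ⟨v, hv⟩] at e2
        rw [G₁.adj_comm, G₂.adj_comm]
        exact e1.symm.trans e2
      · rw [dif_neg hv, dif_neg hw]
        exact hadj' ⟨v, hv⟩ ⟨w, hw⟩


open SimpleGraph in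
theorem reachable_comap {V : Type} {G : SimpleGraph V} {pr : V → Prop} :
    ∀ {u v : V} (p : G.Walk u v), (∀ w, w ∈ p.support → pr w) →
    ∀ (hu : pr u) (hv : pr v),
      (G.comap (Subtype.val : {x // pr x} → V)).Reachable ⟨u, hu⟩ ⟨v, hv⟩ := by
  intro u v p
  induction p with
  | nil => intro _ hu hv; exact Reachable.refl _
  | @cons a b cc h q ih =>
    intro hs ha hc
    have hb : pr b := hs b (by simp)
    have hadj : (G.comap (Subtype.val : {x // pr x} → V)).Adj ⟨a, ha⟩ ⟨b, hb⟩ := h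
    exact hadj.reachable.trans (ih (fun w hw => hs w (by simp [hw])) hb hc)

open SimpleGraph in
theorem total : ∀ (n d : ℕ), d + n ≤ K →
    ∀ (V : Type) [Fintype V] (G : SimpleGraph V) (lab₀ : V → Lab σ K) (r : V),
    G.Connected → (∀ (v : V) (p : G.Walk r v), p.IsPath → p.length ≤ n) →
    ∃ (c : Code σ K n) (lab : V → Lab σ K), Rep σ K n d c V G lab ∧
      (∀ v, (lab v).1 = (lab₀ v).1) ∧
      (∀ v (j : Fin K), (j : ℕ) < d → (lab v).2 j = (lab₀ v).2 j)
  | 0, d, hdn, V, _, G, lab₀, r, hconn, hbound => by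
    classical
    have hsingle : ∀ v : V, v = r := by
      intro v
      obtain ⟨p⟩ := hconn.preconnected r v
      have hp := p.toPath.2
      have h0 : (p.toPath : G.Walk r v).length = 0 := Nat.le_zero.mp (hbound v _ hp)
      exact (SimpleGraph.Walk.eq_of_length_eq_zero h0).symm
    exact ⟨lab₀ r, lab₀, ⟨⟨r⟩, fun v w => (hsingle v).trans (hsingle w).symm,
      fun v => by rw [hsingle v]⟩, fun v => rfl, fun v j _ => rfl⟩
  | n+1, d, hdn, V, _, G, lab₀, r, hconn, hbound => by
    classical
    have hdK : d < K := by omega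
    let Sub := {v : V // v ≠ r}
    let G' : SimpleGraph Sub := G.comap Subtype.val
    haveI : Finite G'.ConnectedComponent := Quot.finite _
    letI : Fintype G'.ConnectedComponent := Fintype.ofFinite _
    let m := Fintype.card G'.ConnectedComponent
    let e : G'.ConnectedComponent ≃ Fin m := Fintype.equivFin _
    let lab₀' : V → Lab σ K := fun v =>
      ((lab₀ v).1, Function.update (lab₀ v).2 ⟨d, hdK⟩ (decide (G.Adj r v)))
    have hcomp : ∀ k : G'.ConnectedComponent,
        ∃ (c : Code σ K n) (lab : {x : Sub // G'.connectedComponentMk x = k} → Lab σ K),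
          Rep σ K n (d+1) c _
            (G.comap (fun y : {x : Sub // G'.connectedComponentMk x = k} => y.1.1)) lab ∧
          (∀ v, (lab v).1 = (lab₀' v.1.1).1) ∧
          (∀ v (j : Fin K), (j : ℕ) < d + 1 → (lab v).2 j = (lab₀' v.1.1).2 j) := by
      intro k
      obtain ⟨x₀, hx₀⟩ := k.exists_rep
      obtain ⟨p0⟩ := hconn.preconnected r x₀.1
      have hpath : (p0.toPath : G.Walk r x₀.1).IsPath := p0.toPath.2
      obtain ⟨b, hadj, q, hq⟩ := Walk.exists_eq_cons_of_ne (Ne.symm x₀.2) (p0.toPath : G.Walk r x₀.1)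
      rw [hq, Walk.cons_isPath_iff] at hpath
      have hbr : b ≠ r := fun hh => hpath.2 (hh ▸ q.start_mem_support)
      have hrq : G'.Reachable ⟨b, hbr⟩ x₀ :=
        reachable_comap (pr := fun v : V => v ≠ r) q (fun w hw hh => hpath.2 (hh ▸ hw)) hbr x₀.2
      have hbk : G'.connectedComponentMk ⟨b, hbr⟩ = k :=
        (SimpleGraph.ConnectedComponent.sound hrq).trans hx₀
      let Vk := {x : Sub // G'.connectedComponentMk x = k}
      let w₀ : Vk := ⟨⟨b, hbr⟩, hbk⟩
      let Gk : SimpleGraph Vk := G.comap (fun y : Vk => y.1.1)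
      have hGkconn : Gk.Connected := by
        haveI : Nonempty Vk := ⟨w₀⟩
        refine ⟨fun x y => ?_⟩
        have hxy : G'.Reachable x.1 y.1 :=
          SimpleGraph.ConnectedComponent.exact (x.2.trans y.2.symm)
        obtain ⟨pq⟩ := hxy
        have hall : ∀ w ∈ pq.support, G'.connectedComponentMk w = k := fun w hw =>
          (SimpleGraph.ConnectedComponent.sound (pq.takeUntil w hw).reachable).symm.trans x.2
        exact reachable_comap (pr := fun x : Sub => G'.connectedComponentMk x = k)
          pq hall x.2 y.2
      have hGkbound : ∀ (v : Vk) (pk : Gk.Walk w₀ v), pk.IsPath → pk.length ≤ n := by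
        intro v pk hpk
        have hinj : Function.Injective (fun y : Vk => y.1.1) :=
          fun a b hab => Subtype.ext (Subtype.ext hab)
        have h1 : ((pk.map (SimpleGraph.Hom.comap _ G)).IsPath) :=
          SimpleGraph.Walk.map_isPath_of_injective hinj hpk
        have hrnot : r ∉ (pk.map (SimpleGraph.Hom.comap _ G)).support := by
          rw [SimpleGraph.Walk.support_map]
          intro hmem
          obtain ⟨y, hy, hy2⟩ := List.mem_map.mp hmem
          exact y.1.2 hy2
        have hadj0 : G.Adj r ((SimpleGraph.Hom.comap (fun y : Vk => y.1.1) G) w₀) := hadj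
        have hcons := hbound _
          (SimpleGraph.Walk.cons hadj0 (pk.map (SimpleGraph.Hom.comap _ G))) (h1.cons hrnot)
        rw [Walk.length_cons, Walk.length_map] at hcons
        omega
      exact total n (d+1) (by omega) Vk Gk (fun y => lab₀' y.1.1) w₀ hGkconn hGkbound
    choose cc clab hcrep hclab1 hclab2 using hcomp
    let cs : List (Code σ K n) := List.ofFn (fun i : Fin m => cc (e.symm i))
    have hl : cs.length = m := List.length_ofFn
    let c : Code σ K (n+1) := ((lab₀ r, cs) : Lab σ K × List (Code σ K n))
    have hml : m = c.2.length := hl.symm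
    let lab : V → Lab σ K := fun v =>
      if h : v = r then lab₀ r else clab (G'.connectedComponentMk ⟨v, h⟩) ⟨⟨v, h⟩, rfl⟩
    have hlabk : ∀ (k) (x : Sub) (hx : G'.connectedComponentMk x = k),
        lab x.1 = clab k ⟨x, hx⟩ := by
      intro k x hx
      subst hx
      show (if h : x.1 = r then lab₀ r else _) = _
      rw [dif_neg x.2]
    let part : Sub → Fin c.2.length := fun x => Fin.cast hml (e (G'.connectedComponentMk x))
    refine ⟨c, lab, ⟨r, ?_, ?_, part, ?_, ?_⟩, ?_, ?_⟩
    · show (if h : r = r then lab₀ r else _) = c.1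
      rw [dif_pos rfl]
    · intro v hv
      have h2 := hclab2 (G'.connectedComponentMk ⟨v, hv⟩) ⟨⟨v, hv⟩, rfl⟩ ⟨d, hdK⟩ (by simpa using Nat.lt_succ_self d)
      have hlv : lab v = clab (G'.connectedComponentMk ⟨v, hv⟩) ⟨⟨v, hv⟩, rfl⟩ :=
        hlabk _ ⟨v, hv⟩ rfl
      constructor
      · rintro ⟨hK, hvec⟩
        have : (lab v).2 ⟨d, hdK⟩ = true := hvec
        rw [hlv, h2] at this
        simp only [lab₀', Function.update_self] at this
        exact of_decide_eq_true this
      · intro hadj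
        refine ⟨hdK, ?_⟩
        rw [hlv, h2]
        simp only [lab₀', Function.update_self]
        exact decide_eq_true hadj
    · intro x y hxy
      have : G'.connectedComponentMk x = G'.connectedComponentMk y :=
        SimpleGraph.ConnectedComponent.sound (SimpleGraph.Adj.reachable (by exact hxy : G'.Adj x y))
      show Fin.cast hml (e _) = Fin.cast hml (e _)
      rw [this]
    · intro i
      have hpred : (fun x : Sub => part x = i) =
          (fun x : Sub => G'.connectedComponentMk x = e.symm (Fin.cast hl i)) := by
        funext x
        apply propext
        constructor
        · intro hh
          apply e.injective
          rw [Equiv.apply_symm_apply]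
          apply Fin.ext
          rw [← Fin.val_eq_val _ _] at hh
          simpa [part] using hh
        · intro hh
          show Fin.cast hml (e _) = i
          rw [hh, Equiv.apply_symm_apply]
          apply Fin.ext
          simp
      have hgeti : c.2.get i = cc (e.symm (Fin.cast hl i)) := by
        show cs.get i = _
        rw [List.get_ofFn]
      rw [hpred, hgeti]
      have hlabfun : (fun y : {x : Sub // G'.connectedComponentMk x = e.symm (Fin.cast hl i)} =>
          lab y.1.1) = clab (e.symm (Fin.cast hl i)) := by
        funext y
        exact hlabk _ y.1 y.2
      rw [hlabfun]
      exact hcrep (e.symm (Fin.cast hl i))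
    · intro v
      by_cases hv : v = r
      · subst hv
        show ((if h : v = v then lab₀ v else _) : Lab σ K).1 = _
        rw [dif_pos rfl]
      · have := hclab1 (G'.connectedComponentMk ⟨v, hv⟩) ⟨⟨v, hv⟩, rfl⟩
        show ((if h : v = r then lab₀ r else _) : Lab σ K).1 = _
        rw [dif_neg hv]
        exact this
    · intro v j hj
      by_cases hv : v = r
      · subst hv
        show ((if h : v = v then lab₀ v else _) : Lab σ K).2 j = _
        rw [dif_pos rfl]
      · have h2 := hclab2 (G'.connectedComponentMk ⟨v, hv⟩) ⟨⟨v, hv⟩, rfl⟩ j (by omega)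
        show ((if h : v = r then lab₀ r else _) : Lab σ K).2 j = _
        rw [dif_neg hv, h2]
        show (Function.update (lab₀ v).2 ⟨d, hdK⟩ _) j = _
        rw [Function.update_of_ne]
        intro hjj
        rw [Fin.ext_iff] at hjj
        simp at hjj
        omega


def FRep (cs : List (Code σ K K)) (V : Type) (G : SimpleGraph V) (lab : V → Lab σ K) : Prop :=
  ∃ part : V → Fin cs.length,
    (∀ v w, G.Adj v w → part v = part w) ∧
    ∀ i, Rep σ K K 0 (cs.get i) {v // part v = i}
      (G.comap (Subtype.val : {v // part v = i} → V)) (fun x => lab x.1)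

theorem mainF (cs₁ cs₂ : List (Code σ K K)) (h : List.SublistForall₂ (CodeRel σ K K) cs₁ cs₂)
    (V₁ V₂ : Type) (G₁ : SimpleGraph V₁) (G₂ : SimpleGraph V₂)
    (lab₁ : V₁ → Lab σ K) (lab₂ : V₂ → Lab σ K)
    (h₁ : FRep cs₁ V₁ G₁ lab₁) (h₂ : FRep cs₂ V₂ G₂ lab₂) :
    ∃ φ : V₁ → V₂, Function.Injective φ ∧ (∀ v, lab₂ (φ v) = lab₁ v) ∧
      ∀ v w, G₁.Adj v w ↔ G₂.Adj (φ v) (φ w) := by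
  obtain ⟨part₁, hp₁, hrep₁⟩ := h₁
  obtain ⟨part₂, hp₂, hrep₂⟩ := h₂
  obtain ⟨g, hg, hget⟩ := sf_index h
  choose ψ hinj hlab hadj using fun i =>
    main K 0 _ _ (hget i) _ _ _ _ _ _ (hrep₁ i) (hrep₂ (g i))
  exact glue G₁ G₂ lab₁ lab₂ part₁ part₂ hp₁ hp₂ g hg ψ hinj
    (fun i x => hlab i x) (fun i x y => hadj i x y)

open SimpleGraph in
theorem totalF (V : Type) [Fintype V] (G : SimpleGraph V) (lab₀ : V → Lab σ K)
    (hp : ∀ (u v : V) (p : G.Walk u v), p.IsPath → p.length ≤ K) :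
    ∃ (cs : List (Code σ K K)) (lab : V → Lab σ K), FRep cs V G lab ∧
      ∀ v, (lab v).1 = (lab₀ v).1 := by
  classical
  haveI : Finite G.ConnectedComponent := Quot.finite _
  letI : Fintype G.ConnectedComponent := Fintype.ofFinite _
  let m := Fintype.card G.ConnectedComponent
  let e : G.ConnectedComponent ≃ Fin m := Fintype.equivFin _
  have hcomp : ∀ k : G.ConnectedComponent,
      ∃ (c : Code σ K K) (lab : {x : V // G.connectedComponentMk x = k} → Lab σ K),
        Rep σ K K 0 c _
          (G.comap (Subtype.val : {x : V // G.connectedComponentMk x = k} → V)) lab ∧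
        (∀ v, (lab v).1 = (lab₀ v.1).1) := by
    intro k
    obtain ⟨x₀, hx₀⟩ := k.exists_rep
    let Vk := {x : V // G.connectedComponentMk x = k}
    let w₀ : Vk := ⟨x₀, hx₀⟩
    let Gk : SimpleGraph Vk := G.comap Subtype.val
    have hGkconn : Gk.Connected := by
      haveI : Nonempty Vk := ⟨w₀⟩
      refine ⟨fun x y => ?_⟩
      have hxy : G.Reachable x.1 y.1 :=
        SimpleGraph.ConnectedComponent.exact (x.2.trans y.2.symm)
      obtain ⟨pq⟩ := hxy
      have hall : ∀ w ∈ pq.support, G.connectedComponentMk w = k := fun w hw =>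
        (SimpleGraph.ConnectedComponent.sound (pq.takeUntil w hw).reachable).symm.trans x.2
      exact reachable_comap (pr := fun x : V => G.connectedComponentMk x = k)
        pq hall x.2 y.2
    have hGkbound : ∀ (v : Vk) (pk : Gk.Walk w₀ v), pk.IsPath → pk.length ≤ K := by
      intro v pk hpk
      have hinj : Function.Injective (Subtype.val : Vk → V) := Subtype.val_injective
      have h1 : ((pk.map (SimpleGraph.Hom.comap _ G)).IsPath) :=
        SimpleGraph.Walk.map_isPath_of_injective hinj hpk
      have := hp _ _ _ h1
      rwa [Walk.length_map] at this
    obtain ⟨c, lab, hrep, hl1, _⟩ :=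
      total K 0 (by omega) Vk Gk (fun y => lab₀ y.1) w₀ hGkconn hGkbound
    exact ⟨c, lab, hrep, hl1⟩
  choose cc clab hcrep hclab using hcomp
  let cs : List (Code σ K K) := List.ofFn (fun i : Fin m => cc (e.symm i))
  have hl : cs.length = m := List.length_ofFn
  let lab : V → Lab σ K := fun v => clab (G.connectedComponentMk v) ⟨v, rfl⟩
  have hlabk : ∀ (k) (x : V) (hx : G.connectedComponentMk x = k),
      lab x = clab k ⟨x, hx⟩ := by
    intro k x hx
    subst hx
    rfl
  let part : V → Fin cs.length := fun v => Fin.cast hl.symm (e (G.connectedComponentMk v))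
  refine ⟨cs, lab, ⟨part, ?_, ?_⟩, ?_⟩
  · intro v w hvw
    have : G.connectedComponentMk v = G.connectedComponentMk w :=
      SimpleGraph.ConnectedComponent.sound hvw.reachable
    show Fin.cast hl.symm (e _) = Fin.cast hl.symm (e _)
    rw [this]
  · intro i
    have hpred : (fun x : V => part x = i) =
        (fun x : V => G.connectedComponentMk x = e.symm (Fin.cast hl i)) := by
      funext x
      apply propext
      constructor
      · intro hh
        apply e.injective
        rw [Equiv.apply_symm_apply]
        apply Fin.ext
        rw [← Fin.val_eq_val _ _] at hh
        simpa [part] using hh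
      · intro hh
        show Fin.cast hl.symm (e _) = i
        rw [hh, Equiv.apply_symm_apply]
        apply Fin.ext
        simp
    have hgeti : cs.get i = cc (e.symm (Fin.cast hl i)) := by
      show cs.get i = _
      rw [List.get_ofFn]
    rw [hpred, hgeti]
    have hlabfun : (fun y : {x : V // G.connectedComponentMk x = e.symm (Fin.cast hl i)} =>
        lab y.1) = clab (e.symm (Fin.cast hl i)) := by
      funext y
      exact hlabk _ y.1 y.2
    rw [hlabfun]
    exact hcrep (e.symm (Fin.cast hl i))
  · intro v
    exact hclab (G.connectedComponentMk v) ⟨v, rfl⟩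


end Stmt5


/-- A finite Σ-labeled undirected graph. -/
structure LGraph (σ : Type) where
  V : Type
  fin : Fintype V
  G : SimpleGraph V
  label : V → σ

/-- `G₁ ⊑ G₂`: `G₁` is (isomorphic to) an induced labeled subgraph of `G₂`. -/
def LGraph.Ind {σ : Type} (G₁ G₂ : LGraph σ) : Prop :=
  ∃ φ : G₁.V → G₂.V, Function.Injective φ ∧
    (∀ v, G₂.label (φ v) = G₁.label v) ∧
    ∀ v w, G₁.G.Adj v w ↔ G₂.G.Adj (φ v) (φ w)

/-- The induced-subgraph relation on finite Σ-labeled graphs in which every simple path has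
length at most `K` is a well-quasi-order. -/
theorem stmt5 (σ : Type) [Finite σ] (K : ℕ) (f : ℕ → LGraph σ)
    (hp : ∀ n, ∀ ⦃u v : (f n).V⦄ (p : (f n).G.Walk u v), p.IsPath → p.length ≤ K) :
    ∃ i j, i < j ∧ (f i).Ind (f j) := by
  classical
  have htot : ∀ n : ℕ, ∃ (cs : List (Stmt5.Code σ K K)) (lab : (f n).V → Stmt5.Lab σ K),
      Stmt5.FRep cs (f n).V (f n).G lab ∧ ∀ v, (lab v).1 = (f n).label v := by
    intro n
    letI := (f n).fin
    exact Stmt5.totalF (f n).V (f n).G (fun v => ((f n).label v, fun _ => false))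
      (fun u v p hp' => hp n p hp')
  choose cs lab hrep hlab using htot
  haveI : IsRefl (Stmt5.Code σ K K) (Stmt5.CodeRel σ K K) := ⟨Stmt5.codeRel_refl K⟩
  haveI : IsTrans (Stmt5.Code σ K K) (Stmt5.CodeRel σ K K) := ⟨Stmt5.codeRel_trans K⟩
  haveI : IsPreorder (Stmt5.Code σ K K) (Stmt5.CodeRel σ K K) := {}
  have hp2 := (Stmt5.codeRel_pwo (σ := σ) (K := K) K).partiallyWellOrderedOn_sublistForall₂
  rw [Set.partiallyWellOrderedOn_iff_exists_lt] at hp2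
  obtain ⟨i, j, hij, hsf⟩ := hp2 cs (fun n x _ => Set.mem_univ x)
  obtain ⟨φ, hinj, hlabφ, hadj⟩ := Stmt5.mainF _ _ hsf _ _ _ _ _ _ (hrep i) (hrep j)
  refine ⟨i, j, hij, φ, hinj, fun v => ?_, hadj⟩
  rw [← hlab j (φ v), hlabφ v, hlab i v]
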